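/- Let (S, R) be a quasi-ordered set and Γ a finite nonempty family of subsets of S. Then x ∈ ⋃{a ⊆ S : a ⊆ ⋂_{γ∈Γ} R⁻¹(γ ∩ a)} if and only if there exists an endless R-path x = x₀ R x₁ R x₂ R ⋯ such that for each γ ∈ Γ there are infinitely many n with x_n ∈ γ. -/

import Mathlib

theorem stmt_10 {S : Type*} (R : S → S → Prop)
    (hrefl : Reflexive R) (htrans : Transitive R)
    (Γ : Finset (Set S)) (hne : Γ.Nonempty) (x : S) :
    x ∈ ⋃₀ {a : Set S | a ⊆ ⋂ γ ∈ Γ, {z | ∃ y, y ∈ γ ∩ a ∧ R z y}} ↔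
      ∃ p : ℕ → S, p 0 = x ∧ (∀ n, R (p n) (p (n + 1))) ∧
        ∀ γ ∈ Γ, ∀ N : ℕ, ∃ n ≥ N, p n ∈ γ := by
  constructor
  · rintro ⟨a, ha, hxa⟩
    simp only [Set.mem_setOf_eq] at ha
    -- enumerate Γ
    obtain ⟨l, hl⟩ : ∃ l : List (Set S), l = Γ.toList := ⟨_, rfl⟩
    have hlen : 0 < l.length := by
      rw [hl, Finset.length_toList]
      exact Finset.card_pos.mpr hne
    have hmemΓ : ∀ n : ℕ, l.get ⟨n % l.length, Nat.mod_lt n hlen⟩ ∈ Γ := by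
      intro n
      have := List.get_mem l ⟨n % l.length, Nat.mod_lt n hlen⟩
      rw [← Finset.mem_toList, ← hl]
      exact this
    have key : ∀ z ∈ a, ∀ n : ℕ,
        ∃ y, y ∈ l.get ⟨n % l.length, Nat.mod_lt n hlen⟩ ∧ y ∈ a ∧ R z y := by
      intro z hz n
      have h1 := ha hz
      rw [Set.mem_iInter₂] at h1
      obtain ⟨y, ⟨hy1, hy2⟩, hy3⟩ := h1 _ (hmemΓ n)
      exact ⟨y, hy1, hy2, hy3⟩
    choose g hg1 hg2 hg3 using key
    -- build the path in the subtype
    let q : ℕ → {z // z ∈ a} := fun n =>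
      Nat.rec ⟨x, hxa⟩ (fun n z => ⟨g z.1 z.2 n, hg2 z.1 z.2 n⟩) n
    refine ⟨fun n => (q n).1, rfl, fun n => hg3 (q n).1 (q n).2 n, ?_⟩
    intro γ hγ N
    obtain ⟨i, hi⟩ : ∃ i : Fin l.length, l.get i = γ := by
      have : γ ∈ l := by rw [hl, Finset.mem_toList]; exact hγ
      obtain ⟨i, hi⟩ := List.get_of_mem this
      exact ⟨i, hi⟩
    refine ⟨N * l.length + i.1 + 1, ?_, ?_⟩
    · have : N ≤ N * l.length := Nat.le_mul_of_pos_right N hlen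
      omega
    · have hmod : (N * l.length + i.1) % l.length = i.1 := by
        rw [Nat.mul_comm, Nat.add_comm, Nat.add_mul_mod_self_left]
        exact Nat.mod_eq_of_lt i.2
      have := hg1 (q (N * l.length + i.1)).1 (q (N * l.length + i.1)).2
        (N * l.length + i.1)
      show (q (N * l.length + i.1 + 1)).1 ∈ γ
      have heq : l.get ⟨(N * l.length + i.1) % l.length,
          Nat.mod_lt _ hlen⟩ = γ := by
        rw [← hi]; congr 1; exact Fin.ext hmod
      rw [← heq]
      exact this
  · rintro ⟨p, hp0, hpR, hpinf⟩
    refine ⟨Set.range p, ?_, ⟨0, hp0⟩⟩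
    simp only [Set.mem_setOf_eq]
    rintro z ⟨n, rfl⟩
    rw [Set.mem_iInter₂]
    intro γ hγ
    obtain ⟨m, hm, hmγ⟩ := hpinf γ hγ n
    refine ⟨p m, ⟨hmγ, ⟨m, rfl⟩⟩, ?_⟩
    -- R (p n) (p m) by transitivity of the chain
    clear hmγ
    obtain ⟨k, rfl⟩ := Nat.exists_eq_add_of_le hm
    induction k with
    | zero => exact hrefl _
    | succ k ih =>
        exact htrans (ih (Nat.le_add_right _ _)) (hpR (n + k))
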